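/- Let 𝔘 be a Banach algebra with 𝔘♯ symmetrically pseudo-amenable, and X a Banach 𝔘-bimodule. Then every bounded central derivation δ : 𝔘 → X (i.e., δ(𝔘) ⊆ Z_𝔘(X)) is zero. -/

import Mathlib

open Filter Topology

universe u

/-- A realization of the projective Banach-space tensor square `A ⊗̂ A` of a (non-unital)
Banach algebra `A`, together with the canonical bimodule operations `a•t`, `t•a`, the
"opposite" operations `a∘t`, `t∘a`, the product maps `π`, `π°` and the flip map, each
characterized by its values on elementary tensors.  The norm is the projective tensor norm:
`‖a ⊗ b‖ ≤ ‖a‖‖b‖` and every element is an absolutely convergent sum of elementary tensors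
whose total norm is arbitrarily close to its norm; moreover bounded bilinear maps lift. -/
structure ProjTensorSquare (A : Type u) [NonUnitalNormedRing A] [NormedSpace ℂ A]
    [IsScalarTower ℂ A A] [SMulCommClass ℂ A A] [CompleteSpace A] where
  /-- the underlying Banach space of `A ⊗̂ A` -/
  T : Type u
  [nacg : NormedAddCommGroup T]
  [nsp : NormedSpace ℂ T]
  [cplt : CompleteSpace T]
  /-- the canonical bilinear map `(a, b) ↦ a ⊗ b` -/
  tmul : A →L[ℂ] A →L[ℂ] T
  norm_tmul_le : ∀ a b : A, ‖tmul a b‖ ≤ ‖a‖ * ‖b‖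
  /-- the projective norm property -/
  exists_rep : ∀ (t : T) (ε : ℝ), 0 < ε → ∃ u v : ℕ → A,
      Summable (fun n => ‖u n‖ * ‖v n‖) ∧ HasSum (fun n => tmul (u n) (v n)) t ∧
      ∑' n, ‖u n‖ * ‖v n‖ ≤ ‖t‖ + ε
  /-- the universal property: bounded bilinear maps into a Banach space lift to `T` -/
  lift : ∀ {X : Type u} [NormedAddCommGroup X] [NormedSpace ℂ X] [CompleteSpace X]
      (f : A →L[ℂ] A →L[ℂ] X), ∃ g : T →L[ℂ] X, (∀ a b, g (tmul a b) = f a b) ∧ ‖g‖ ≤ ‖f‖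
  /-- the left module action: `a • (b ⊗ c) = (a * b) ⊗ c` -/
  lmul : A → T →L[ℂ] T
  lmul_tmul : ∀ a b c, lmul a (tmul b c) = tmul (a * b) c
  /-- the right module action: `(b ⊗ c) • a = b ⊗ (c * a)` -/
  rmul : A → T →L[ℂ] T
  rmul_tmul : ∀ a b c, rmul a (tmul b c) = tmul b (c * a)
  /-- the left opposite action: `a ∘ (b ⊗ c) = b ⊗ (a * c)` -/
  lcirc : A → T →L[ℂ] T
  lcirc_tmul : ∀ a b c, lcirc a (tmul b c) = tmul b (a * c)
  /-- the right opposite action: `(b ⊗ c) ∘ a = (b * a) ⊗ c` -/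
  rcirc : A → T →L[ℂ] T
  rcirc_tmul : ∀ a b c, rcirc a (tmul b c) = tmul (b * a) c
  /-- the product map `π : b ⊗ c ↦ b * c` -/
  π : T →L[ℂ] A
  π_tmul : ∀ b c, π (tmul b c) = b * c
  /-- the opposite product map `π° : b ⊗ c ↦ c * b` -/
  πop : T →L[ℂ] A
  πop_tmul : ∀ b c, πop (tmul b c) = c * b
  /-- the flip map `(b ⊗ c)° = c ⊗ b` -/
  flip : T →L[ℂ] T
  flip_tmul : ∀ b c, flip (tmul b c) = tmul c b

attribute [instance] ProjTensorSquare.nacg ProjTensorSquare.nsp ProjTensorSquare.cplt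

namespace ProjTensorSquare

variable {A : Type u} [NonUnitalNormedRing A] [NormedSpace ℂ A]
    [IsScalarTower ℂ A A] [SMulCommClass ℂ A A] [CompleteSpace A]

/-- `t` is an approximate diagonal for `A` consisting of symmetric tensors, along the
filter `l`:  each `t i` is symmetric, `a • tᵢ - tᵢ • a → 0` and `π(tᵢ) a → a` for all `a`. -/
def IsSymmApproxDiagonal (P : ProjTensorSquare A) {ι : Type u} (l : Filter ι)
    (t : ι → P.T) : Prop :=
  (∀ i, P.flip (t i) = t i) ∧
  (∀ a : A, Tendsto (fun i => P.lmul a (t i) - P.rmul a (t i)) l (𝓝 0)) ∧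
  (∀ a : A, Tendsto (fun i => P.π (t i) * a) l (𝓝 a))

/-- A Banach algebra is symmetrically pseudo-amenable if it has a (not necessarily bounded)
approximate diagonal consisting of symmetric tensors. -/
def SymmPseudoAmenable (P : ProjTensorSquare A) : Prop :=
  ∃ (ι : Type u) (l : Filter ι) (t : ι → P.T), l.NeBot ∧ P.IsSymmApproxDiagonal l t

end ProjTensorSquare

/-- A Banach `A`-bimodule: a Banach space with commuting bounded left and right `A`-actions. -/
structure BanachBimodule (A X : Type u) [NonUnitalNormedRing A] [NormedSpace ℂ A]
    [NormedAddCommGroup X] [NormedSpace ℂ X] where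
  /-- the left action `(a, x) ↦ a • x` -/
  lsmul : A →L[ℂ] X →L[ℂ] X
  /-- the right action `(a, x) ↦ x • a` -/
  rsmul : A →L[ℂ] X →L[ℂ] X
  lsmul_mul : ∀ a b x, lsmul (a * b) x = lsmul a (lsmul b x)
  rsmul_mul : ∀ a b x, rsmul (a * b) x = rsmul b (rsmul a x)
  lsmul_rsmul : ∀ a b x, lsmul a (rsmul b x) = rsmul b (lsmul a x)

namespace BanachBimodule

variable {A X : Type u} [NonUnitalNormedRing A] [NormedSpace ℂ A]
  [NormedAddCommGroup X] [NormedSpace ℂ X]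

/-- `D(ab) = D(a)·b + a·D(b)` -/
def IsDerivation (M : BanachBimodule A X) (D : A → X) : Prop :=
  ∀ a b, D (a * b) = M.rsmul b (D a) + M.lsmul a (D b)

/-- `D(ab + ba) = D(a)·b + a·D(b) + D(b)·a + b·D(a)` -/
def IsJordanDerivation (M : BanachBimodule A X) (D : A → X) : Prop :=
  ∀ a b, D (a * b + b * a) =
    M.rsmul b (D a) + M.lsmul a (D b) + M.rsmul a (D b) + M.lsmul b (D a)

/-- `D(ab − ba) = D(a)·b + a·D(b) − D(b)·a − b·D(a)` -/
def IsLieDerivation (M : BanachBimodule A X) (D : A → X) : Prop :=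
  ∀ a b, D (a * b - b * a) =
    M.rsmul b (D a) + M.lsmul a (D b) - M.rsmul a (D b) - M.lsmul b (D a)

/-- the center `Z_𝔘(X) = {x ∈ X | a·x = x·a for all a ∈ 𝔘}` -/
def center (M : BanachBimodule A X) : Set X := {x | ∀ a, M.lsmul a x = M.rsmul a x}

/-- the left action extended to the `ℓ¹`-unitization `𝔘♯`, via `1 • x = x` -/
noncomputable def uLsmul (M : BanachBimodule A X) (a : WithLp 1 (Unitization ℂ A)) (x : X) : X :=
  (WithLp.equiv 1 (Unitization ℂ A) a).fst • x + M.lsmul ((WithLp.equiv 1 (Unitization ℂ A)) a).snd x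

/-- the right action extended to the `ℓ¹`-unitization `𝔘♯`, via `x • 1 = x` -/
noncomputable def uRsmul (M : BanachBimodule A X) (a : WithLp 1 (Unitization ℂ A)) (x : X) : X :=
  (WithLp.equiv 1 (Unitization ℂ A) a).fst • x + M.rsmul ((WithLp.equiv 1 (Unitization ℂ A)) a).snd x

end BanachBimodule

set_option linter.unusedSectionVars false
set_option maxHeartbeats 1000000

section Aux
variable {A X : Type u} [NonUnitalNormedRing A] [NormedSpace ℂ A]
    [IsScalarTower ℂ A A] [SMulCommClass ℂ A A] [CompleteSpace A]
    [NormedAddCommGroup X] [NormedSpace ℂ X] [CompleteSpace X]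

local notation "𝔄" => WithLp 1 (Unitization ℂ A)
local notation "e" => WithLp.equiv 1 (Unitization ℂ A)

/-- the `ℂ`-component, as a continuous linear map -/
noncomputable def cdFstL : 𝔄 →L[ℂ] ℂ :=
  LinearMap.mkContinuous
    ((Unitization.fstHom ℂ A).toLinearMap ∘ₗ (WithLp.linearEquiv 1 ℂ (Unitization ℂ A)).toLinearMap)
    1 (fun u => by
      rw [WithLp.unitization_norm_def u, one_mul]
      simpa using le_add_of_nonneg_right (norm_nonneg _))

/-- the `A`-component, as a continuous linear map -/
noncomputable def cdSndL : 𝔄 →L[ℂ] A :=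
  LinearMap.mkContinuous
    ((Unitization.sndHom ℂ ℂ A) ∘ₗ (WithLp.linearEquiv 1 ℂ (Unitization ℂ A)).toLinearMap)
    1 (fun u => by
      rw [WithLp.unitization_norm_def u, one_mul]
      simpa using le_add_of_nonneg_left (norm_nonneg _))

@[simp] lemma cdFstL_apply (u : 𝔄) : cdFstL u = (e u).fst := rfl

@[simp] lemma cdSndL_apply (u : 𝔄) : cdSndL u = (e u).snd := rfl

variable (M : BanachBimodule A X) (δ : A →L[ℂ] X)

/-- the extended left action, as a continuous (bi)linear map -/
noncomputable def cdLAct : 𝔄 →L[ℂ] X →L[ℂ] X :=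
  cdFstL.smulRight (ContinuousLinearMap.id ℂ X) + M.lsmul.comp cdSndL

/-- the extended right action, as a continuous (bi)linear map -/
noncomputable def cdRAct : 𝔄 →L[ℂ] X →L[ℂ] X :=
  cdFstL.smulRight (ContinuousLinearMap.id ℂ X) + M.rsmul.comp cdSndL

lemma cdLAct_apply (u : 𝔄) (x : X) : cdLAct M u x = M.uLsmul u x := rfl

lemma cdRAct_apply (u : 𝔄) (x : X) : cdRAct M u x = M.uRsmul u x := rfl

/-- the extension of `δ` to the unitization -/
noncomputable def cdD : 𝔄 →L[ℂ] X := δ.comp cdSndL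

lemma cdD_apply (u : 𝔄) : cdD δ u = δ (e u).snd := rfl

/-- associativity of the extended left action -/
lemma cd_uL_mul (u v : 𝔄) (x : X) :
    M.uLsmul (u * v) x = M.uLsmul u (M.uLsmul v x) := by
  simp only [BanachBimodule.uLsmul, WithLp.equiv_apply, WithLp.unitization_mul, Unitization.fst_mul,
    Unitization.snd_mul, map_add, map_smul, ContinuousLinearMap.add_apply,
    ContinuousLinearMap.smul_apply, M.lsmul_mul, smul_add, smul_smul]
  abel

/-- the extended left action commutes with the right `A`-action -/
lemma cd_uL_rsmul (u : 𝔄) (b : A) (x : X) :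
    M.uLsmul u (M.rsmul b x) = M.rsmul b (M.uLsmul u x) := by
  simp only [BanachBimodule.uLsmul, map_add, map_smul, M.lsmul_rsmul]

/-- the extended left and right actions commute -/
lemma cd_uL_uR (u v : 𝔄) (x : X) :
    M.uLsmul u (M.uRsmul v x) = M.uRsmul v (M.uLsmul u x) := by
  simp only [BanachBimodule.uLsmul, BanachBimodule.uRsmul, map_add, map_smul, smul_add,
    M.lsmul_rsmul, smul_comm ((e u).fst) ((e v).fst)]
  abel

/-- interaction of the extended left action with the left `A`-action -/
lemma cd_uL_lsmul (u : 𝔄) (b : A) (x : X) :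
    M.uLsmul u (M.lsmul b x) =
      M.lsmul ((e (u * (e).symm (Unitization.inr b))).snd) x := by
  simp only [BanachBimodule.uLsmul, WithLp.equiv_apply, WithLp.equiv_symm_apply, WithLp.ofLp_toLp,
    WithLp.unitization_mul, Equiv.apply_symm_apply,
    Unitization.snd_mul, Unitization.fst_inr, Unitization.snd_inr, zero_smul, add_zero,
    map_add, map_smul, M.lsmul_mul, ContinuousLinearMap.add_apply,
    ContinuousLinearMap.smul_apply, zero_add]

/-- `cdD` is a derivation for the extended actions -/
lemma cdD_derivation (hδ : M.IsDerivation δ) (u v : 𝔄) :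
    cdD δ (u * v) = M.uRsmul v (cdD δ u) + M.uLsmul u (cdD δ v) := by
  simp only [cdD_apply, WithLp.equiv_apply, WithLp.unitization_mul, Unitization.snd_mul, map_add, map_smul,
    hδ (WithLp.ofLp u).snd (WithLp.ofLp v).snd, BanachBimodule.uRsmul, BanachBimodule.uLsmul]
  abel

/-- central elements are central for the extended actions -/
lemma cd_central_ext {x : X} (hx : x ∈ M.center) (u : 𝔄) :
    M.uLsmul u x = M.uRsmul u x := by
  simp only [BanachBimodule.uLsmul, BanachBimodule.uRsmul, hx _]

end Aux
section Tensor
variable {A X : Type u} [NonUnitalNormedRing A] [NormedSpace ℂ A]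
    [IsScalarTower ℂ A A] [SMulCommClass ℂ A A] [CompleteSpace A]
    [NormedAddCommGroup X] [NormedSpace ℂ X] [CompleteSpace X]

/-- two continuous linear maps out of `A ⊗̂ A` agreeing on elementary tensors agree -/
lemma ProjTensorSquare.clm_ext {B : Type u} [NonUnitalNormedRing B] [NormedSpace ℂ B]
    [IsScalarTower ℂ B B] [SMulCommClass ℂ B B] [CompleteSpace B]
    (P : ProjTensorSquare B) {Y : Type u} [NormedAddCommGroup Y] [NormedSpace ℂ Y]
    {f g : P.T →L[ℂ] Y} (h : ∀ a b, f (P.tmul a b) = g (P.tmul a b)) : f = g := by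
  ext t
  obtain ⟨u, v, -, hsum, -⟩ := P.exists_rep t 1 one_pos
  have hf := hsum.mapL f
  have hg := hsum.mapL g
  exact hf.unique (by simpa only [h] using hg)

variable (M : BanachBimodule A X) (δ : A →L[ℂ] X)
  (P : ProjTensorSquare (WithLp 1 (Unitization ℂ A)))

local notation "𝔄" => WithLp 1 (Unitization ℂ A)
local notation "e" => WithLp.equiv 1 (Unitization ℂ A)

/-- the lifted map `Φ : u ⊗ v ↦ u • δ♯(v)` -/
noncomputable def cdPhi : P.T →L[ℂ] X :=
  (P.lift (((ContinuousLinearMap.compL ℂ 𝔄 X X).flip (cdD δ)).comp (cdLAct M))).choose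

lemma cdPhi_tmul (u v : 𝔄) : cdPhi M δ P (P.tmul u v) = M.uLsmul u (cdD δ v) :=
  (P.lift _).choose_spec.1 u v

lemma cdPhi_lmul (a : 𝔄) :
    (cdPhi M δ P).comp (P.lmul a) = (cdLAct M a).comp (cdPhi M δ P) := by
  refine P.clm_ext fun u v => ?_
  simp only [ContinuousLinearMap.comp_apply, P.lmul_tmul, cdPhi_tmul, cdLAct_apply,
    cd_uL_mul]

lemma cd_uL_add (u : WithLp 1 (Unitization ℂ A)) (x y : X) :
    M.uLsmul u (x + y) = M.uLsmul u x + M.uLsmul u y := by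
  simp only [BanachBimodule.uLsmul, map_add, smul_add]; abel

lemma cdPhi_rmul (hδ : M.IsDerivation δ) (a : 𝔄) :
    (cdPhi M δ P).comp (P.rmul a) =
      (cdRAct M a).comp (cdPhi M δ P) + ((cdLAct M).flip (cdD δ a)).comp P.π := by
  refine P.clm_ext fun u v => ?_
  simp only [ContinuousLinearMap.comp_apply, ContinuousLinearMap.add_apply, P.rmul_tmul,
    cdPhi_tmul, cdRAct_apply, ContinuousLinearMap.flip_apply, cdLAct_apply, P.π_tmul]
  rw [cdD_derivation M δ hδ v a, cd_uL_add, cd_uL_uR, cd_uL_mul]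

lemma cdPhi_flip (hδ : M.IsDerivation δ) (hcentral : ∀ a, δ a ∈ M.center) :
    (cdPhi M δ P).comp P.flip + cdPhi M δ P = (cdD δ).comp P.π := by
  refine P.clm_ext fun u v => ?_
  have hc : cdD δ u ∈ M.center := hcentral _
  simp only [ContinuousLinearMap.comp_apply, ContinuousLinearMap.add_apply, P.flip_tmul,
    cdPhi_tmul, P.π_tmul]
  rw [cd_central_ext M hc v]
  exact (cdD_derivation M δ hδ u v).symm

end Tensor
/-- Let `𝔘` be a Banach algebra with `𝔘♯` symmetrically pseudo-amenable, and
`X` a Banach `𝔘`-bimodule.  Then every bounded central derivation `δ : 𝔘 → X` is zero. -/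
theorem central_derivation_eq_zero {A X : Type u} [NonUnitalNormedRing A] [NormedSpace ℂ A]
    [IsScalarTower ℂ A A] [SMulCommClass ℂ A A] [CompleteSpace A]
    [NormedAddCommGroup X] [NormedSpace ℂ X] [CompleteSpace X]
    (P : ProjTensorSquare (WithLp 1 (Unitization ℂ A))) (hP : P.SymmPseudoAmenable)
    (M : BanachBimodule A X) (δ : A →L[ℂ] X)
    (hδ : M.IsDerivation δ) (hcentral : ∀ a, δ a ∈ M.center) :
    δ = 0 := by
  classical
  obtain ⟨ι, l, t, hne, hflip, hcomm, hπ⟩ := hP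
  haveI := hne
  set Φ : P.T →L[ℂ] X := cdPhi M δ P with hΦdef
  set D : WithLp 1 (Unitization ℂ A) →L[ℂ] X := cdD δ with hDdef
  set j : A → WithLp 1 (Unitization ℂ A) :=
    fun c => (WithLp.equiv 1 (Unitization ℂ A)).symm (Unitization.inr c) with hjdef
  have hDj : ∀ c : A, D (j c) = δ c := fun c => by
    simp [hDdef, hjdef, cdD_apply]
  -- `Φ (t i)` equals `2⁻¹ • D (π (t i))`, hence is central
  have hΦeq : ∀ i, Φ (t i) = (2 : ℂ)⁻¹ • D (P.π (t i)) := by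
    intro i
    have h2 : Φ (P.flip (t i)) + Φ (t i) = D (P.π (t i)) :=
      DFunLike.congr_fun (cdPhi_flip M δ P hδ hcentral) (t i)
    rw [hflip i] at h2
    calc Φ (t i) = (2 : ℂ)⁻¹ • ((2 : ℂ) • Φ (t i)) := by
          rw [smul_smul]; norm_num
      _ = (2 : ℂ)⁻¹ • D (P.π (t i)) := by rw [two_smul, h2]
  have hΦc : ∀ i, Φ (t i) ∈ M.center := by
    intro i b
    rw [hΦeq i, map_smul, map_smul]
    congr 1
    exact hcentral _ b
  -- the key convergence: `π (t i) • D a → 0` for every `a` in the unitization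
  have key : ∀ a : WithLp 1 (Unitization ℂ A),
      Tendsto (fun i => M.uLsmul (P.π (t i)) (D a)) l (𝓝 0) := by
    intro a
    have h1 : Tendsto (fun i => Φ (P.lmul a (t i) - P.rmul a (t i))) l (𝓝 0) := by
      have := (Φ.continuous.tendsto 0).comp (hcomm a)
      simpa [Function.comp_def, map_sub] using this
    have h2 : ∀ i, Φ (P.lmul a (t i) - P.rmul a (t i))
        = - M.uLsmul (P.π (t i)) (D a) := by
      intro i
      have e1 : Φ (P.lmul a (t i)) = M.uLsmul a (Φ (t i)) :=
        DFunLike.congr_fun (cdPhi_lmul M δ P a) (t i)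
      have e2 : Φ (P.rmul a (t i))
          = M.uRsmul a (Φ (t i)) + M.uLsmul (P.π (t i)) (D a) :=
        DFunLike.congr_fun (cdPhi_rmul M δ P hδ a) (t i)
      rw [map_sub, e1, e2, cd_central_ext M (hΦc i) a]
      abel
    rw [funext h2] at h1
    simpa using h1.neg
  -- consequence 1: all left (hence right) actions kill the range of `δ`
  have hls0 : ∀ b c : A, M.lsmul b (δ c) = 0 := by
    intro b c
    have h1 : Tendsto (fun i => M.uLsmul (P.π (t i)) (δ (b * c))) l (𝓝 0) := by
      have := key (j (b * c)); rwa [hDj] at this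
    have hdecomp : ∀ i, M.uLsmul (P.π (t i)) (δ (b * c))
        = M.rsmul c (M.uLsmul (P.π (t i)) (δ b))
          + M.uLsmul (P.π (t i)) (M.lsmul b (δ c)) := by
      intro i
      rw [hδ b c, cd_uL_add, cd_uL_rsmul]
    have hA : Tendsto (fun i => M.rsmul c (M.uLsmul (P.π (t i)) (δ b))) l (𝓝 0) := by
      have hb : Tendsto (fun i => M.uLsmul (P.π (t i)) (δ b)) l (𝓝 0) := by
        have := key (j b); rwa [hDj] at this
      have := ((M.rsmul c).continuous.tendsto 0).comp hb
      simpa [Function.comp_def] using this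
    have hB : Tendsto (fun i => M.uLsmul (P.π (t i)) (M.lsmul b (δ c))) l
        (𝓝 (M.lsmul b (δ c))) := by
      have hrw : ∀ i, M.uLsmul (P.π (t i)) (M.lsmul b (δ c))
          = ((M.lsmul.flip (δ c)).comp cdSndL) (P.π (t i) * j b) := by
        intro i
        simp only [hjdef, ContinuousLinearMap.comp_apply, ContinuousLinearMap.flip_apply,
          cdSndL_apply]
        exact cd_uL_lsmul M (P.π (t i)) b (δ c)
      rw [funext hrw]
      have hcont := (((M.lsmul.flip (δ c)).comp cdSndL).continuous.tendsto (j b)).comp (hπ (j b))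
      have hval : M.lsmul b (δ c) = ((M.lsmul.flip (δ c)).comp cdSndL) (j b) := by
        simp [hjdef]
      rw [hval]
      exact hcont
    rw [funext hdecomp] at h1
    have := tendsto_nhds_unique h1 (hA.add hB)
    simpa using this.symm
  have hmul0 : ∀ b c : A, δ (b * c) = 0 := by
    intro b c
    rw [hδ b c, ← hcentral b c, hls0, hls0, add_zero]
  -- conclusion
  ext c
  have h1 : Tendsto (fun i => (WithLp.equiv 1 (Unitization ℂ A) (P.π (t i))).fst • δ c)
      l (𝓝 0) := by
    have := key (j c); rw [hDj] at this
    simpa [BanachBimodule.uLsmul, hls0] using this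
  have h2 : Tendsto (fun i => (WithLp.equiv 1 (Unitization ℂ A) (P.π (t i))).fst • δ c)
      l (𝓝 (δ c)) := by
    have h3 := (D.continuous.tendsto (j c)).comp (hπ (j c))
    have h4 : ∀ i, D (P.π (t i) * j c)
        = (WithLp.equiv 1 (Unitization ℂ A) (P.π (t i))).fst • δ c := by
      intro i
      simp [hDdef, cdD_apply, WithLp.unitization_mul, hjdef, Unitization.snd_mul,
        Unitization.fst_inr, Unitization.snd_inr, hmul0, map_smul]
    have h5 : (fun i => D (P.π (t i) * j c)) =
        fun i => (WithLp.equiv 1 (Unitization ℂ A) (P.π (t i))).fst • δ c := funext h4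
    rw [Function.comp_def, h5] at h3
    rwa [hDj] at h3
  have := tendsto_nhds_unique h1 h2
  simpa using this.symm
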